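/- For every ε > 0, for all sufficiently large r, the primorial n = ∏_{q ≤ r, q prime} q satisfies d(n) = 2^{π(r)} ≥ 2^{(1-ε)·(log n)/(log log n)}, where d is the divisor-counting function and π is the prime-counting function. -/

import Mathlib

open Finset Filter Asymptotics

private lemma aux_divisors (S : Finset ℕ) (hS : ∀ p ∈ S, p.Prime) :
    (∏ p ∈ S, p).divisors.card = 2 ^ S.card := by
  have hne : (∏ p ∈ S, p) ≠ 0 := Finset.prod_ne_zero_iff.2 fun p hp => (hS p hp).ne_zero
  rw [Nat.card_divisors hne, Nat.primeFactors_prod hS]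
  have h2 : ∀ p ∈ S, (∏ q ∈ S, q).factorization p + 1 = 2 := by
    intro p hp
    have h1 : (∏ q ∈ S, q).factorization p = 1 := by
      rw [Nat.factorization_prod (fun q hq => (hS q hq).ne_zero)]
      rw [Finset.sum_apply']
      rw [Finset.sum_eq_single p]
      · rw [(hS p hp).factorization]; simp
      · intro q hq hqp; rw [(hS q hq).factorization, Finsupp.single_apply]; simp [hqp]
      · intro h; exact absurd hp h
    omega
  rw [Finset.prod_congr rfl h2, Finset.prod_const]

private lemma aux_centralBinom (m : ℕ) (hm : 1 ≤ m) :
    Nat.centralBinom m ≤ (2*m) ^ Nat.sqrt (2*m) * primorial (2*m) := by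
  have h2m : 0 < 2*m := by omega
  set N := Nat.centralBinom m with hN
  have hNch : N = (2*m).choose m := rfl
  have hNne : N ≠ 0 := Nat.centralBinom_ne_zero m
  set T : Finset ℕ := (Finset.range (2*m+1)).filter Nat.Prime with hT
  have hsupp : N.primeFactors ⊆ T := by
    intro p hp
    have hpp : p.Prime := Nat.prime_of_mem_primeFactors hp
    have hple : p ≤ 2*m := by
      by_contra h
      have h0 : N.factorization p = 0 := by
        rw [hNch]; exact Nat.factorization_choose_eq_zero_of_lt (by omega)
      have hpos := Nat.Prime.factorization_pos_of_dvd hpp hNne (Nat.dvd_of_mem_primeFactors hp)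
      omega
    simp [hT, Finset.mem_filter, Finset.mem_range]
    exact ⟨by omega, hpp⟩
  have hprod : N = ∏ p ∈ T, p ^ N.factorization p := by
    conv_lhs => rw [← Nat.factorization_prod_pow_eq_self hNne]
    rw [Nat.prod_factorization_eq_prod_primeFactors]
    exact Finset.prod_subset hsupp (by
      intro p hpT hpn
      rw [← Nat.support_factorization] at hpn
      simp only [Finsupp.mem_support_iff, not_not] at hpn
      simp [hpn])
  rw [hprod, ← Finset.prod_filter_mul_prod_filter_not T (fun p => p ≤ Nat.sqrt (2*m))]
  apply Nat.mul_le_mul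
  · calc ∏ p ∈ T.filter (fun p => p ≤ Nat.sqrt (2*m)), p ^ N.factorization p
        ≤ ∏ _p ∈ T.filter (fun p => p ≤ Nat.sqrt (2*m)), (2*m) := by
          apply Finset.prod_le_prod'
          intro p hp
          rw [hNch]
          exact Nat.pow_factorization_choose_le h2m
      _ = (2*m) ^ (T.filter (fun p => p ≤ Nat.sqrt (2*m))).card := by rw [Finset.prod_const]
      _ ≤ (2*m) ^ Nat.sqrt (2*m) := by
          apply Nat.pow_le_pow_right (by omega)
          have hsub : T.filter (fun p => p ≤ Nat.sqrt (2*m)) ⊆ Finset.Ioc 1 (Nat.sqrt (2*m)) := by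
            intro p hp
            simp only [hT, Finset.mem_filter, Finset.mem_range, Finset.mem_Ioc] at hp ⊢
            exact ⟨hp.1.2.one_lt, hp.2⟩
          calc (T.filter (fun p => p ≤ Nat.sqrt (2*m))).card
              ≤ (Finset.Ioc 1 (Nat.sqrt (2*m))).card := Finset.card_le_card hsub
            _ = Nat.sqrt (2*m) - 1 := by rw [Nat.card_Ioc]
            _ ≤ Nat.sqrt (2*m) := Nat.sub_le _ _
  · calc ∏ p ∈ T.filter (fun p => ¬ p ≤ Nat.sqrt (2*m)), p ^ N.factorization p
        ≤ ∏ p ∈ T.filter (fun p => ¬ p ≤ Nat.sqrt (2*m)), p := by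
          apply Finset.prod_le_prod'
          intro p hp
          simp only [hT, Finset.mem_filter, Finset.mem_range, not_le] at hp
          obtain ⟨⟨hpr, hpp⟩, hps⟩ := hp
          have hlarge : 2*m < p^2 := by
            have := (Nat.sqrt_lt').mp hps
            nlinarith
          have hle1 : N.factorization p ≤ 1 := by
            rw [hNch]; exact Nat.factorization_choose_le_one hlarge
          calc p ^ N.factorization p ≤ p ^ 1 := Nat.pow_le_pow_right hpp.one_lt.le hle1
            _ = p := pow_one p
      _ ≤ ∏ p ∈ T, p := by
          apply Finset.prod_le_prod_of_subset_of_one_le' (Finset.filter_subset _ _)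
          intro p hpT _
          simp only [hT, Finset.mem_filter] at hpT
          exact hpT.2.one_lt.le
      _ = primorial (2*m) := rfl

private lemma aux_littleO :
    (fun x : ℝ => (1 + Real.sqrt x) * Real.log x + Real.log 2) =o[atTop] (id : ℝ → ℝ) := by
  have hsqrt : (fun x : ℝ => Real.sqrt x) =O[atTop] (fun x : ℝ => x ^ (1/2 : ℝ)) := by
    apply Asymptotics.IsBigO.of_bound 1
    filter_upwards [eventually_ge_atTop (0:ℝ)] with x hx
    rw [Real.sqrt_eq_rpow]
    simp [abs_of_nonneg (Real.rpow_nonneg hx _)]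
  have hlog : Real.log =o[atTop] (fun x : ℝ => x ^ (1/2 : ℝ)) :=
    isLittleO_log_rpow_atTop (by norm_num)
  have hmul : (fun x : ℝ => Real.sqrt x * Real.log x) =o[atTop] (id : ℝ → ℝ) := by
    have := hsqrt.mul_isLittleO hlog
    apply this.trans_eventuallyEq
    filter_upwards [eventually_gt_atTop (0:ℝ)] with x hx
    rw [← Real.rpow_add hx]
    norm_num
  have hlog' : (fun x : ℝ => Real.log x) =o[atTop] (id : ℝ → ℝ) := Real.isLittleO_log_id_atTop
  have hconst : (fun _ : ℝ => Real.log 2) =o[atTop] (id : ℝ → ℝ) :=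
    isLittleO_const_id_atTop _
  have := (hlog'.add hmul).add hconst
  apply this.congr' _ (EventuallyEq.refl _ _)
  filter_upwards with x
  ring

private lemma aux_primorial_mono : Monotone primorial := by
  intro a b hab
  apply Finset.prod_le_prod_of_subset_of_one_le'
  · exact Finset.filter_subset_filter _ (Finset.range_subset_range.mpr (by omega))
  · intro p hp _
    exact (Finset.mem_filter.mp hp).2.one_lt.le

private lemma aux_cheby : ∀ᶠ r : ℕ in atTop, (r : ℝ)/2 ≤ Real.log (primorial r) := by
  have hc : (0:ℝ) < Real.log 2 - 1/2 := by
    have := Real.log_two_gt_d9; norm_num at this ⊢; linarith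
  have hb := aux_littleO.bound hc
  have hb' : ∀ᶠ r : ℕ in atTop,
      (1 + Real.sqrt r) * Real.log r + Real.log 2 ≤ (Real.log 2 - 1/2) * r := by
    have := tendsto_natCast_atTop_atTop (R := ℝ) |>.eventually hb
    filter_upwards [this, eventually_ge_atTop 1] with r h hr1
    have h0 : (0:ℝ) ≤ (r:ℝ) := Nat.cast_nonneg r
    calc (1 + Real.sqrt r) * Real.log r + Real.log 2
        ≤ ‖(1 + Real.sqrt r) * Real.log r + Real.log 2‖ := by
          rw [Real.norm_eq_abs]; exact le_abs_self _
      _ ≤ (Real.log 2 - 1/2) * ‖(r:ℝ)‖ := h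
      _ = (Real.log 2 - 1/2) * r := by rw [Real.norm_eq_abs, abs_of_nonneg h0]
  filter_upwards [hb', eventually_ge_atTop 2] with r hbound hr2
  set m := r / 2 with hm
  have hm1 : 1 ≤ m := by omega
  have h2m : 2 * m ≤ r := by omega
  have hrm : (r:ℝ) - 1 ≤ 2 * m := by
    have h : r ≤ 2 * m + 1 := by omega
    have := (Nat.cast_le (α := ℝ)).mpr h
    push_cast at this; linarith
  have key : 4 ^ m ≤ 2 * m * ((2*m) ^ Nat.sqrt (2*m) * primorial (2*m)) :=
    le_trans (Nat.four_pow_le_two_mul_self_mul_centralBinom m hm1)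
      (Nat.mul_le_mul_left _ (aux_centralBinom m hm1))
  have hkeyR : ((4:ℝ)) ^ m ≤ (2*m : ℝ) * ((2*m : ℝ) ^ Nat.sqrt (2*m) * (primorial (2*m) : ℝ)) := by
    exact_mod_cast key
  have h2mpos : (0:ℝ) < 2*(m:ℝ) := by positivity
  have hppos : (0:ℝ) < (primorial (2*m) : ℝ) := by exact_mod_cast primorial_pos (2*m)
  have hXne : (2*(m:ℝ)) ≠ 0 := by positivity
  have hXsne : ((2*(m:ℝ)) ^ Nat.sqrt (2*m)) ≠ 0 := by positivity
  have hPne : (primorial (2*m) : ℝ) ≠ 0 := ne_of_gt hppos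
  have hlogkey : (m:ℝ) * Real.log 4 ≤
      Real.log (2*(m:ℝ)) + (Nat.sqrt (2*m) : ℝ) * Real.log (2*(m:ℝ))
        + Real.log (primorial (2*m) : ℝ) := by
    have h := Real.log_le_log (by positivity) hkeyR
    rw [Real.log_pow] at h
    rw [Real.log_mul hXne (mul_ne_zero hXsne hPne)] at h
    rw [Real.log_mul hXsne hPne] at h
    rw [Real.log_pow] at h
    linarith
  have hlog4 : Real.log 4 = 2 * Real.log 2 := by
    rw [show (4:ℝ) = 2^2 by norm_num, Real.log_pow]; push_cast; ring
  have hsqrt_le : (Nat.sqrt (2*m) : ℝ) ≤ Real.sqrt r := by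
    have h1 : Nat.sqrt (2*m) ^ 2 ≤ r := le_trans (Nat.sqrt_le' (2*m)) h2m
    have h2 : ((Nat.sqrt (2*m) : ℝ))^2 ≤ (r:ℝ) := by
      exact_mod_cast h1
    exact (Real.le_sqrt (Nat.cast_nonneg _) (Nat.cast_nonneg _)).mpr h2
  have hlog2m_le : Real.log (2*(m:ℝ)) ≤ Real.log r := by
    apply Real.log_le_log h2mpos
    exact_mod_cast h2m
  have hlogp_le : Real.log (primorial (2*m) : ℝ) ≤ Real.log (primorial r : ℝ) := by
    apply Real.log_le_log hppos
    exact_mod_cast aux_primorial_mono h2m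
  have hlogr0 : 0 ≤ Real.log r :=
    Real.log_nonneg (by exact_mod_cast Nat.one_le_iff_ne_zero.mpr (by omega))
  have hsq0 : (0:ℝ) ≤ (Nat.sqrt (2*m) : ℝ) := Nat.cast_nonneg _
  have hstep : ((r:ℝ) - 1) * Real.log 2 ≤ (1 + Real.sqrt r) * Real.log r + Real.log (primorial r) := by
    have hm4 : ((r:ℝ) - 1) * Real.log 2 ≤ (m:ℝ) * Real.log 4 := by
      rw [hlog4]
      nlinarith [Real.log_pos (by norm_num : (1:ℝ) < 2)]
    have t1 : (Nat.sqrt (2*m) : ℝ) * Real.log (2*(m:ℝ)) ≤ Real.sqrt r * Real.log r := by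
      apply mul_le_mul hsqrt_le hlog2m_le ?_ (Real.sqrt_nonneg _)
      apply Real.log_nonneg
      have h1 : (1:ℕ) ≤ 2*m := by omega
      have := (Nat.cast_le (α := ℝ)).mpr h1
      push_cast at this; linarith
    linarith
  nlinarith [hstep, hbound]

private lemma aux_upper (r : ℕ) (hr : 1 ≤ r) :
    Real.log (primorial r : ℝ) ≤
      (((Finset.range (r+1)).filter Nat.Prime).card : ℝ) * Real.log r := by
  have hcast : (primorial r : ℝ) = ∏ p ∈ (Finset.range (r+1)).filter Nat.Prime, (p:ℝ) := by
    rw [primorial]; push_cast; rfl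
  rw [hcast, Real.log_prod (fun p hp => by
    exact_mod_cast (Finset.mem_filter.mp hp).2.ne_zero)]
  calc ∑ p ∈ (Finset.range (r+1)).filter Nat.Prime, Real.log (p:ℝ)
      ≤ ∑ _p ∈ (Finset.range (r+1)).filter Nat.Prime, Real.log (r:ℝ) := by
        apply Finset.sum_le_sum
        intro p hp
        obtain ⟨hpr, hpp⟩ := Finset.mem_filter.mp hp
        apply Real.log_le_log (by exact_mod_cast hpp.pos)
        exact_mod_cast Nat.lt_succ_iff.mp (Finset.mem_range.mp hpr)
    _ = _ := by rw [Finset.sum_const, nsmul_eq_mul]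

theorem stmt7 (ε : ℝ) (hε : 0 < ε) :
    ∃ R : ℕ, ∀ r : ℕ, R ≤ r →
      (((∏ q ∈ (Finset.range (r + 1)).filter Nat.Prime, q).divisors.card)
          = 2 ^ ((Finset.range (r + 1)).filter Nat.Prime).card) ∧
      ((2 : ℝ) ^ (((Finset.range (r + 1)).filter Nat.Prime).card : ℝ) ≥
        (2 : ℝ) ^ ((1 - ε) *
          Real.log (∏ q ∈ (Finset.range (r + 1)).filter Nat.Prime, q) /
          Real.log (Real.log (∏ q ∈ (Finset.range (r + 1)).filter Nat.Prime, q)))) := by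
  have hεlog : ∀ᶠ r : ℕ in atTop, Real.log 2 ≤ ε * Real.log r := by
    have htend : Tendsto (fun r : ℕ => Real.log r) atTop atTop :=
      Real.tendsto_log_atTop.comp (tendsto_natCast_atTop_atTop (R := ℝ))
    filter_upwards [htend.eventually_ge_atTop (Real.log 2 / ε)] with r hr
    rw [div_le_iff₀ hε] at hr
    linarith [hr]
  have main : ∀ᶠ r : ℕ in atTop,
      (1 - ε) * Real.log (primorial r : ℝ) / Real.log (Real.log (primorial r : ℝ))
        ≤ (((Finset.range (r+1)).filter Nat.Prime).card : ℝ) := by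
    filter_upwards [aux_cheby, hεlog, eventually_ge_atTop 3] with r hch hεr hr3
    set L := Real.log (primorial r : ℝ) with hL
    set c := (((Finset.range (r+1)).filter Nat.Prime).card : ℝ) with hc
    have hr3R : (3:ℝ) ≤ (r:ℝ) := by exact_mod_cast hr3
    have hrpos : (0:ℝ) < r := by linarith
    have hlogr : 0 < Real.log r := Real.log_pos (by linarith)
    have hLge : (r:ℝ)/2 ≤ L := hch
    have hLgt1 : 1 < L := by linarith
    have hLpos : 0 < L := by linarith
    have hlogL : 0 < Real.log L := Real.log_pos hLgt1
    have hupper : L ≤ c * Real.log r := aux_upper r (by omega)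
    have hcard : L / Real.log r ≤ c := (div_le_iff₀ hlogr).mpr hupper
    by_cases hεlt : ε < 1
    · have h1ε : 0 < 1 - ε := by linarith
      have hlogL_ge : (1 - ε) * Real.log r ≤ Real.log L := by
        have hmono : Real.log ((r:ℝ)/2) ≤ Real.log L := by
          apply Real.log_le_log (by positivity) hLge
        rw [Real.log_div (ne_of_gt hrpos) (by norm_num)] at hmono
        nlinarith
      have hpos2 : 0 < (1 - ε) * Real.log r := by positivity
      calc (1 - ε) * L / Real.log L
          ≤ (1 - ε) * L / ((1 - ε) * Real.log r) :=
            div_le_div_of_nonneg_left (by positivity) hpos2 hlogL_ge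
        _ = L / Real.log r := by
            rw [mul_div_mul_left _ _ (ne_of_gt h1ε)]
        _ ≤ c := hcard
    · have hnum : (1 - ε) * L ≤ 0 := mul_nonpos_of_nonpos_of_nonneg (by linarith) hLpos.le
      have : (1 - ε) * L / Real.log L ≤ 0 := div_nonpos_of_nonpos_of_nonneg hnum hlogL.le
      have hc0 : (0:ℝ) ≤ c := by positivity
      linarith
  rw [Filter.eventually_atTop] at main
  obtain ⟨R, hR⟩ := main
  refine ⟨R, fun r hr => ⟨?_, ?_⟩⟩
  · exact aux_divisors _ (fun p hp => (Finset.mem_filter.mp hp).2)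
  · rw [ge_iff_le, Real.rpow_le_rpow_left_iff (by norm_num : (1:ℝ) < 2)]
    have hprod : (primorial r : ℝ) = ∏ q ∈ (Finset.range (r+1)).filter Nat.Prime, (q:ℝ) := by
      rw [primorial]; push_cast; rfl
    rw [← hprod]
    exact hR r hr
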